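/- Let τ₀, u₀, ν, F > 0 and r > 0, s, c ∈ ℝ, let c_s := τ₀^{-3/2}/√F, and let P(λ,k) := λ² + (r/u₀ − 2ick + νk²/τ₀²)·λ + ik·[(s+1)/τ₀ − cr/u₀ + ik(c² − c_s²) − cνk²/τ₀²]. Suppose λ : ℝ → ℂ is twice differentiable on a neighborhood of 0, λ(0) = 0, and P(λ(k), k) = 0 for all k in that neighborhood. Then λ''(0)/2 = (u₀/r)·[(((s+1)/r)·(u₀/τ₀))² − c_s²]. In particular, if the subcharacteristic condition fails, i.e. ((s+1)/r)·(u₀/τ₀) > c_s, then Re λ''(0) > 0. -/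

import Mathlib

open Complex Filter

private lemma cubicHasDerivAt (A B C D : ℂ) (x : ℝ) :
    HasDerivAt (fun k : ℝ => A + B*(k:ℂ) + C*((k:ℂ)*(k:ℂ)) + D*((k:ℂ)*(k:ℂ)*(k:ℂ)))
      (B + 2*C*(x:ℂ) + 3*D*((x:ℂ)*(x:ℂ))) x := by
  have h : HasDerivAt (fun k : ℝ => (k:ℂ)) 1 x := by
    simpa using (hasDerivAt_id x).ofReal_comp
  have h1 := (((hasDerivAt_const x A).add (h.const_mul B)).add
      (((h.mul h).const_mul C))).add (((h.mul h).mul h).const_mul D)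
  convert h1 using 1 <;> first | rfl | (simp only [Pi.mul_apply]; ring)

/-- Second-order expansion of the zero root of the dispersion relation of the
linearized viscous St. Venant equations at frequency `k = 0`:
`λ''(0)/2 = (u₀/r)·[(((s+1)/r)·(u₀/τ₀))² − c_s²]`; failure of the
subcharacteristic condition forces `Re λ''(0) > 0`, i.e. spectral instability. -/
theorem stmt3 (τ₀ u₀ ν F r s c : ℝ) (hτ₀ : 0 < τ₀) (hu₀ : 0 < u₀) (hν : 0 < ν)
    (hF : 0 < F) (hr : 0 < r)
    (cs : ℝ) (hcs : cs = τ₀ ^ (-(3 : ℝ) / 2) / Real.sqrt F)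
    (P : ℂ → ℝ → ℂ)
    (hP : ∀ (lam : ℂ) (k : ℝ), P lam k =
      lam ^ 2
        + ((r : ℂ) / (u₀ : ℂ) - 2 * Complex.I * (c : ℂ) * (k : ℂ)
            + (ν : ℂ) * (k : ℂ) ^ 2 / (τ₀ : ℂ) ^ 2) * lam
        + Complex.I * (k : ℂ) *
            (((s : ℂ) + 1) / (τ₀ : ℂ) - (c : ℂ) * (r : ℂ) / (u₀ : ℂ)
              + Complex.I * (k : ℂ) * ((c : ℂ) ^ 2 - (cs : ℂ) ^ 2)
              - (c : ℂ) * (ν : ℂ) * (k : ℂ) ^ 2 / (τ₀ : ℂ) ^ 2))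
    (lam : ℝ → ℂ) (U : Set ℝ) (hU : U ∈ nhds (0 : ℝ))
    (hdiff : ∀ x ∈ U, DifferentiableAt ℝ lam x)
    (hdiff2 : ∀ x ∈ U, DifferentiableAt ℝ (deriv lam) x)
    (hlam0 : lam 0 = 0)
    (hroot : ∀ x ∈ U, P (lam x) x = 0) :
    deriv (deriv lam) 0 / 2
      = ((u₀ : ℂ) / (r : ℂ)) *
          (((((s : ℂ) + 1) / (r : ℂ)) * ((u₀ : ℂ) / (τ₀ : ℂ))) ^ 2 - (cs : ℂ) ^ 2)
    ∧ (((s + 1) / r) * (u₀ / τ₀) > cs → 0 < (deriv (deriv lam) 0).re) := by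
  have h0U : (0:ℝ) ∈ U := mem_of_mem_nhds hU
  have hτ : (τ₀:ℂ) ≠ 0 := by exact_mod_cast hτ₀.ne'
  have hu : (u₀:ℂ) ≠ 0 := by exact_mod_cast hu₀.ne'
  have hrc : (r:ℂ) ≠ 0 := by exact_mod_cast hr.ne'
  -- coefficients
  set a0 : ℂ := (r:ℂ)/(u₀:ℂ) with ha0
  set a1 : ℂ := -(2*Complex.I*(c:ℂ)) with ha1
  set a2 : ℂ := (ν:ℂ)/(τ₀:ℂ)^2 with ha2
  set b1 : ℂ := Complex.I*(((s:ℂ)+1)/(τ₀:ℂ) - (c:ℂ)*(r:ℂ)/(u₀:ℂ)) with hb1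
  set b2 : ℂ := -((c:ℂ)^2 - (cs:ℂ)^2) with hb2
  set b3 : ℂ := -(Complex.I*(c:ℂ)*(ν:ℂ)/(τ₀:ℂ)^2) with hb3
  set g : ℝ → ℂ := fun k =>
    lam k * lam k
      + (a0 + a1*(k:ℂ) + a2*((k:ℂ)*(k:ℂ)) + 0*((k:ℂ)*(k:ℂ)*(k:ℂ))) * lam k
      + ((0:ℂ) + b1*(k:ℂ) + b2*((k:ℂ)*(k:ℂ)) + b3*((k:ℂ)*(k:ℂ)*(k:ℂ))) with hgdef
  have hg0 : ∀ᶠ k in nhds (0:ℝ), g k = 0 := by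
    filter_upwards [hU] with k hk
    have h := hroot k hk
    rw [hP] at h
    rw [hgdef]
    simp only
    rw [ha0, ha1, ha2, hb1, hb2, hb3]
    linear_combination h + ((k:ℂ)^2*(cs:ℂ)^2 - (c:ℂ)^2*(k:ℂ)^2) * Complex.I_sq
  set E : ℝ → ℂ := fun x =>
    2 * lam x * deriv lam x
      + ((a1 + (2*a2)*(x:ℂ) + (3*(0:ℂ))*((x:ℂ)*(x:ℂ)) + 0*((x:ℂ)*(x:ℂ)*(x:ℂ))) * lam x
          + (a0 + a1*(x:ℂ) + a2*((x:ℂ)*(x:ℂ)) + 0*((x:ℂ)*(x:ℂ)*(x:ℂ))) * deriv lam x)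
      + (b1 + (2*b2)*(x:ℂ) + (3*b3)*((x:ℂ)*(x:ℂ)) + 0*((x:ℂ)*(x:ℂ)*(x:ℂ))) with hEdef
  have hgderiv : ∀ x ∈ U, deriv g x = E x := by
    intro x hx
    have hl := (hdiff x hx).hasDerivAt
    have ha := cubicHasDerivAt a0 a1 a2 0 x
    have hb := cubicHasDerivAt 0 b1 b2 b3 x
    have hG : HasDerivAt g
        ((deriv lam x * lam x + lam x * deriv lam x)
          + ((a1 + 2*a2*(x:ℂ) + 3*(0:ℂ)*((x:ℂ)*(x:ℂ))) * lam x
              + (a0 + a1*(x:ℂ) + a2*((x:ℂ)*(x:ℂ)) + 0*((x:ℂ)*(x:ℂ)*(x:ℂ))) * deriv lam x)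
          + (b1 + 2*b2*(x:ℂ) + 3*b3*((x:ℂ)*(x:ℂ)))) x :=
      ((hl.mul hl).add (ha.mul hl)).add hb
    rw [hG.deriv, hEdef]
    ring
  have hE0 : ∀ᶠ x in nhds (0:ℝ), E x = 0 := by
    have hgeq : g =ᶠ[nhds 0] (fun _ => (0:ℂ)) := hg0
    have hd := hgeq.deriv
    filter_upwards [hU, hd] with x hx h2
    rw [← hgderiv x hx, h2, deriv_const]
  have E1 : E 0 = 0 := hE0.self_of_nhds
  have hE2 : deriv E 0 = 0 := by
    have hEeq : E =ᶠ[nhds 0] (fun _ => (0:ℂ)) := hE0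
    rw [hEeq.deriv_eq, deriv_const]
  have hl0 := (hdiff 0 h0U).hasDerivAt
  have hld2 := (hdiff2 0 h0U).hasDerivAt
  have hA' := cubicHasDerivAt a1 (2*a2) (3*(0:ℂ)) 0 0
  have hA := cubicHasDerivAt a0 a1 a2 0 0
  have hB' := cubicHasDerivAt b1 (2*b2) (3*b3) 0 0
  have hEd : HasDerivAt E
      ((2 * deriv lam 0 * deriv lam 0 + 2 * lam 0 * deriv (deriv lam) 0)
        + ((((2*a2) + 2*(3*(0:ℂ))*(((0:ℝ)):ℂ) + 3*(0:ℂ)*((((0:ℝ)):ℂ)*(((0:ℝ)):ℂ))) * lam 0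
              + (a1 + (2*a2)*(((0:ℝ)):ℂ) + (3*(0:ℂ))*((((0:ℝ)):ℂ)*(((0:ℝ)):ℂ)) + 0*((((0:ℝ)):ℂ)*(((0:ℝ)):ℂ)*(((0:ℝ)):ℂ))) * deriv lam 0)
            + ((a1 + 2*a2*(((0:ℝ)):ℂ) + 3*(0:ℂ)*((((0:ℝ)):ℂ)*(((0:ℝ)):ℂ))) * deriv lam 0
              + (a0 + a1*(((0:ℝ)):ℂ) + a2*((((0:ℝ)):ℂ)*(((0:ℝ)):ℂ)) + 0*((((0:ℝ)):ℂ)*(((0:ℝ)):ℂ)*(((0:ℝ)):ℂ))) * deriv (deriv lam) 0))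
        + ((2*b2) + 2*(3*b3)*(((0:ℝ)):ℂ) + 3*(0:ℂ)*((((0:ℝ)):ℂ)*(((0:ℝ)):ℂ)))) 0 :=
    (((hl0.const_mul (2:ℂ)).mul hld2).add ((hA'.mul hl0).add (hA.mul hld2))).add hB'
  have E2 := hEd.deriv.symm.trans hE2
  rw [hEdef] at E1
  simp only [Complex.ofReal_zero, mul_zero, zero_mul, add_zero, zero_add, hlam0] at E1 E2
  rw [ha0, hb1] at E1
  rw [ha0, ha1, hb2] at E2
  field_simp at E1 E2
  have hx : deriv lam 0 * ((r:ℂ) * (τ₀:ℂ)) = -(Complex.I*(((s:ℂ)+1)*(u₀:ℂ) - (τ₀:ℂ)*(c:ℂ)*(r:ℂ))) := by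
    linear_combination E1
  have hy : deriv (deriv lam) 0 * ((r:ℂ)^3*(τ₀:ℂ)^2)
      = 2*(u₀:ℂ)*((((s:ℂ)+1)*(u₀:ℂ))^2 - (cs:ℂ)^2*(r:ℂ)^2*(τ₀:ℂ)^2) := by
    linear_combination ((r:ℂ)^2*(τ₀:ℂ)^2) * E2
      + (-2*(u₀:ℂ))*(deriv lam 0*(r:ℂ)*(τ₀:ℂ) - Complex.I*(((s:ℂ)+1)*(u₀:ℂ) - (τ₀:ℂ)*(c:ℂ)*(r:ℂ)) - 2*Complex.I*(c:ℂ)*(r:ℂ)*(τ₀:ℂ)) * hx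
      + (-2*(u₀:ℂ))*((((s:ℂ)+1)*(u₀:ℂ) - (τ₀:ℂ)*(c:ℂ)*(r:ℂ))^2 + 2*(c:ℂ)*(r:ℂ)*(τ₀:ℂ)*(((s:ℂ)+1)*(u₀:ℂ) - (τ₀:ℂ)*(c:ℂ)*(r:ℂ))) * Complex.I_sq
  have part1 : deriv (deriv lam) 0 / 2
      = ((u₀ : ℂ) / (r : ℂ)) *
          (((((s : ℂ) + 1) / (r : ℂ)) * ((u₀ : ℂ) / (τ₀ : ℂ))) ^ 2 - (cs : ℂ) ^ 2) := by
    field_simp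
    linear_combination hy
  refine ⟨part1, fun hlt => ?_⟩
  have hcsp : 0 < cs := by rw [hcs]; positivity
  have key : deriv (deriv lam) 0
      = ((2*(u₀/r*(((s+1)/r*(u₀/τ₀))^2 - cs^2)) : ℝ) : ℂ) := by
    push_cast
    linear_combination 2*part1
  rw [key, Complex.ofReal_re]
  have h2 : 0 < ((s+1)/r*(u₀/τ₀))^2 - cs^2 := by nlinarith
  have h3 : 0 < u₀/r := div_pos hu₀ hr
  nlinarith [mul_pos h3 h2]
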